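/- Let F be an orthogonal (projection-valued) measure on a half-open interval [a,b) with values in B(H), and let Ω, Ω₁ : [a,b) → B(H) be such that the operator-spectral integrals ∫ Ω₁(λ) F(dλ) and ∫ Ω(λ) F(dλ) exist (as norm limits of Riemann–Stieltjes sums) and Ω satisfies the commutation relation Ω(λ)F(δ) = F(δ)Ω(λ)F(δ) for every Borel set δ ⊆ [a,b) and every λ. Then the integral ∫ Ω₁(λ)Ω(λ) F(dλ) exists and equals (∫ Ω₁(λ) F(dλ)) · (∫ Ω(μ) F(dμ)). -/

import Mathlib

set_option linter.unusedSectionVars false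


open scoped InnerProductSpace

variable {H : Type*} [NormedAddCommGroup H] [InnerProductSpace ℂ H] [CompleteSpace H]

/-- The Riemann–Stieltjes sum `∑ Ω(x_m) F(Δ_m)` of an operator-valued function `Ω` with respect
to an operator-valued measure `F`, for the partition `pts` of an interval with tags `tags`. -/
noncomputable def RSsum (F : Set ℝ → (H →L[ℂ] H)) (Ω : ℝ → (H →L[ℂ] H)) {n : ℕ}
    (pts : Fin (n + 1) → ℝ) (tags : Fin n → ℝ) : H →L[ℂ] H :=
  ∑ i : Fin n, (Ω (tags i)) ∘L (F (Set.Ico (pts i.castSucc) (pts i.succ)))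

/-- `IsRSIntegral a b F Ω J` means that the operator-spectral integral `∫_{[a,b)} Ω(λ) F(dλ)`
exists and equals `J`, i.e. the Riemann–Stieltjes sums converge in operator norm to `J`
as the mesh of the partition tends to `0`, independently of the choice of tags. -/
def IsRSIntegral (a b : ℝ) (F : Set ℝ → (H →L[ℂ] H)) (Ω : ℝ → (H →L[ℂ] H))
    (J : H →L[ℂ] H) : Prop :=
  ∀ ε > 0, ∃ δ > 0, ∀ (n : ℕ) (pts : Fin (n + 1) → ℝ) (tags : Fin n → ℝ),
    pts 0 = a → pts (Fin.last n) = b → StrictMono pts →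
    (∀ i : Fin n, tags i ∈ Set.Ico (pts i.castSucc) (pts i.succ)) →
    (∀ i : Fin n, pts i.succ - pts i.castSucc < δ) →
    ‖RSsum F Ω pts tags - J‖ < ε

lemma RSsum_comp_empty (F : Set ℝ → (H →L[ℂ] H))
    (hFmul : ∀ δ₁ δ₂ : Set ℝ, F δ₁ ∘L F δ₂ = F (δ₁ ∩ δ₂))
    (Ω : ℝ → (H →L[ℂ] H)) {n : ℕ} (pts : Fin (n + 1) → ℝ) (tags : Fin n → ℝ) :
    RSsum F Ω pts tags ∘L F ∅ = ∑ i : Fin n, Ω (tags i) ∘L F ∅ := by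
  have : RSsum F Ω pts tags ∘L F ∅ = RSsum F Ω pts tags * F ∅ := rfl
  rw [this, RSsum, Finset.sum_mul]
  refine Finset.sum_congr rfl fun i _ => ?_
  have : (Ω (tags i) ∘L F (Set.Ico (pts i.castSucc) (pts i.succ))) * F ∅
      = Ω (tags i) ∘L (F (Set.Ico (pts i.castSucc) (pts i.succ)) ∘L F ∅) := rfl
  rw [this, hFmul, Set.inter_empty]

set_option maxHeartbeats 1000000 in
lemma keyP {a b : ℝ} (hab : a < b) {F : Set ℝ → (H →L[ℂ] H)}
    (hFmul : ∀ δ₁ δ₂ : Set ℝ, F δ₁ ∘L F δ₂ = F (δ₁ ∩ δ₂))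
    {Ω : ℝ → (H →L[ℂ] H)} {J : H →L[ℂ] H} (hΩ : IsRSIntegral a b F Ω J)
    {l : ℝ} (hl : l ∈ Set.Ico a b) : Ω l ∘L F ∅ = 0 := by
  have hla : a ≤ l := hl.1
  have hlb : l < b := hl.2
  have hbl : (0:ℝ) < b - l := sub_pos.mpr hlb
  have hP : ∀ ε > 0, ‖Ω l ∘L F ∅‖ ≤ 2 * ε * ‖F ∅‖ := by
    intro ε hε
    obtain ⟨δ, hδpos, hδ⟩ := hΩ ε hε
    set δ' : ℝ := δ / 2 with hδ'def
    have hδ' : 0 < δ' := by positivity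
    set p : ℕ := ⌈(l - a) / δ'⌉₊ with hp
    set q : ℕ := ⌈(b - l) / δ'⌉₊ with hq
    have hq1 : 1 ≤ q := Nat.ceil_pos.mpr (div_pos hbl hδ')
    have hqc : (0:ℝ) < q := by exact_mod_cast hq1
    have hqle : (b - l) / q ≤ δ' := by
      rw [div_le_iff₀ hqc]
      have h := Nat.le_ceil ((b - l) / δ')
      rw [← hq] at h
      rw [div_le_iff₀ hδ'] at h
      linarith
    set f : ℕ → ℝ := fun i => if i ≤ p then a + (l - a) * i / p
      else l + (b - l) * ((i : ℝ) - p) / q with hf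
    have hfr : ∀ i, p ≤ i → f i = l + (b - l) * ((i : ℝ) - p) / q := by
      intro i hi
      rcases eq_or_lt_of_le hi with h | h
      · rcases Nat.eq_zero_or_pos p with h0 | h0
        · have hle : (l - a) / δ' ≤ 0 := by
            rw [← Nat.ceil_eq_zero (R := ℝ), ← hp, h0]
          have h1 : l ≤ a := by
            by_contra hc
            push_neg at hc
            have : 0 < (l - a) / δ' := div_pos (by linarith) hδ'
            linarith
          have hla' : l = a := le_antisymm h1 hla
          have hi0 : i = 0 := by omega
          simp [hf, hi0, h0, hla']
        · have hpne : (p:ℝ) ≠ 0 := by positivity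
          rw [hf]
          simp only [← h, le_refl, if_pos]
          field_simp
          ring
        -- end cases on p
      · rw [hf]
        simp only [if_neg (by omega : ¬ i ≤ p)]
    have hfp : f p = l := by rw [hfr p le_rfl]; simp
    have hstep : ∀ i, 0 < f (i + 1) - f i ∧ f (i + 1) - f i ≤ δ' := by
      intro i
      by_cases hip : i + 1 ≤ p
      · have hp1 : 0 < p := by omega
        have hpc : (0:ℝ) < p := by exact_mod_cast hp1
        have hlap : 0 < (l - a) / δ' := by
          rw [hp] at hp1
          exact Nat.ceil_pos.mp hp1
        have hla2 : 0 < l - a := by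
          by_contra hc
          push_neg at hc
          have : (l - a) / δ' ≤ 0 := div_nonpos_of_nonpos_of_nonneg (by linarith) hδ'.le
          linarith
        have h1 : f (i + 1) - f i = (l - a) / p := by
          rw [hf]
          simp only [if_pos hip, if_pos (by omega : i ≤ p)]
          push_cast
          field_simp
          ring
        have hple : (l - a) / p ≤ δ' := by
          rw [div_le_iff₀ hpc]
          have h := Nat.le_ceil ((l - a) / δ')
          rw [← hp] at h
          rw [div_le_iff₀ hδ'] at h
          linarith
        exact ⟨by rw [h1]; positivity, by rw [h1]; exact hple⟩
      · have hpi : p ≤ i := by omega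
        have h1 : f (i + 1) - f i = (b - l) / q := by
          rw [hfr i hpi, hfr (i + 1) (by omega)]
          push_cast
          field_simp
          ring
        exact ⟨by rw [h1]; positivity, by rw [h1]; exact hqle⟩
    have hf0 : f 0 = a := by simp [hf]
    set n : ℕ := p + q with hn
    have hfn : f n = b := by
      rw [hfr n (by omega)]
      push_cast [hn]
      field_simp
      ring
    -- the midpoint to insert
    set m : ℝ := l + (b - l) / (2 * q) with hm
    have hmq : 0 < (b - l) / (2 * q) := by positivity
    have hm1 : f p < m := by rw [hfp, hm]; linarith
    have hfp1 : f (p + 1) = l + (b - l) / q := by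
      rw [hfr (p + 1) (by omega)]
      push_cast
      ring_nf
    have hm2 : m < f (p + 1) := by
      rw [hfp1, hm]
      have : (b - l) / (2 * q) < (b - l) / q := by
        rw [div_lt_div_iff₀ (by positivity) hqc]
        nlinarith
      linarith
    have hmdl : m - f p = (b - l) / (2 * q) := by rw [hfp, hm]; ring
    have hmdr : f (p + 1) - m = (b - l) / (2 * q) := by
      rw [hfp1, hm]
      field_simp
      ring
    have hhalf : (b - l) / (2 * q) ≤ δ' := by
      have : (b - l) / (2 * q) ≤ (b - l) / q := by
        rw [div_le_div_iff₀ (by positivity) hqc]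
        nlinarith
      linarith
    set g : ℕ → ℝ := fun i => if i ≤ p then f i else if i = p + 1 then m else f (i - 1) with hg
    have hgle : ∀ i, i ≤ p → g i = f i := by
      intro i hi; rw [hg]; simp only [if_pos hi]
    have hgp1 : g (p + 1) = m := by
      rw [hg]; simp only [if_neg (by omega : ¬ p + 1 ≤ p)]; simp
    have hgtop : ∀ i, p + 2 ≤ i → g i = f (i - 1) := by
      intro i hi
      rw [hg]
      simp only [if_neg (by omega : ¬ i ≤ p), if_neg (by omega : ¬ i = p + 1)]
    have hg0 : g 0 = a := by rw [hgle 0 (by omega)]; exact hf0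
    have hgn : g (n + 1) = b := by
      rw [hgtop (n + 1) (by omega)]
      simpa using hfn
    have hgstep : ∀ i, 0 < g (i + 1) - g i ∧ g (i + 1) - g i ≤ δ' := by
      intro i
      rcases lt_trichotomy i p with h | h | h
      · rw [hgle (i + 1) (by omega), hgle i (by omega)]
        exact hstep i
      · subst h
        rw [hgp1, hgle p le_rfl, hmdl]
        exact ⟨by positivity, hhalf⟩
      · rcases eq_or_lt_of_le (by omega : p + 1 ≤ i) with h2 | h2
        · subst h2
          rw [hgp1, hgtop (p + 1 + 1) (by omega)]
          have e : p + 1 + 1 - 1 = p + 1 := by omega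
          rw [e, hmdr]
          exact ⟨by positivity, hhalf⟩
        · rw [hgtop (i + 1) (by omega), hgtop i (by omega)]
          have e1 : i + 1 - 1 = (i - 1) + 1 := by omega
          rw [e1]
          exact hstep (i - 1)
    have hδ'δ : δ' < δ := by rw [hδ'def]; linarith
    have hA : ‖RSsum F Ω (fun i : Fin (n + 1) => f i)
        (fun i : Fin n => if (i : ℕ) = p then m else f i) - J‖ < ε := by
      refine hδ n _ _ ?_ ?_ ?_ ?_ ?_
      · simpa using hf0
      · simpa using hfn
      · rw [Fin.strictMono_iff_lt_succ]
        intro i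
        simp only [Fin.coe_castSucc, Fin.val_succ]
        have := (hstep i).1
        linarith
      · intro i
        by_cases hip : (i : ℕ) = p
        · simp only [if_pos hip, Set.mem_Ico, Fin.coe_castSucc, Fin.val_succ, hip]
          exact ⟨hm1.le, hm2⟩
        · simp only [if_neg hip, Set.mem_Ico, Fin.coe_castSucc, Fin.val_succ]
          exact ⟨le_refl _, by have := (hstep i).1; linarith⟩
      · intro i
        simp only [Fin.coe_castSucc, Fin.val_succ]
        have := (hstep i).2
        linarith
    have hB : ‖RSsum F Ω (fun i : Fin (n + 1 + 1) => g i)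
        (fun i : Fin (n + 1) => g i) - J‖ < ε := by
      refine hδ (n + 1) _ _ ?_ ?_ ?_ ?_ ?_
      · simpa using hg0
      · simpa using hgn
      · rw [Fin.strictMono_iff_lt_succ]
        intro i
        simp only [Fin.coe_castSucc, Fin.val_succ]
        have := (hgstep i).1
        linarith
      · intro i
        simp only [Set.mem_Ico, Fin.coe_castSucc, Fin.val_succ]
        exact ⟨le_refl _, by have := (hgstep i).1; linarith⟩
      · intro i
        simp only [Fin.coe_castSucc, Fin.val_succ]
        have := (hgstep i).2
        linarith
    have hcompA : RSsum F Ω (fun i : Fin (n + 1) => f i)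
          (fun i : Fin n => if (i : ℕ) = p then m else f i) ∘L F ∅
        = ∑ i ∈ Finset.range n, Ω (if i = p then m else f i) ∘L F ∅ := by
      rw [RSsum_comp_empty F hFmul]
      exact Fin.sum_univ_eq_sum_range (fun i => Ω (if i = p then m else f i) ∘L F ∅) n
    have hcompB : RSsum F Ω (fun i : Fin (n + 1 + 1) => g i)
          (fun i : Fin (n + 1) => g i) ∘L F ∅
        = ∑ i ∈ Finset.range (n + 1), Ω (g i) ∘L F ∅ := by
      rw [RSsum_comp_empty F hFmul]
      exact Fin.sum_univ_eq_sum_range (fun i => Ω (g i) ∘L F ∅) (n + 1)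
    set u : ℕ → (H →L[ℂ] H) := fun i => Ω (g i) ∘L F ∅ with hu
    set v : ℕ → (H →L[ℂ] H) := fun i => Ω (if i = p then m else f i) ∘L F ∅ with hv
    have hsum : ∑ i ∈ Finset.range (n + 1), u i
        = (∑ i ∈ Finset.range n, v i) + Ω l ∘L F ∅ := by
      have hsplitU : ∑ i ∈ Finset.range (n + 1), u i
          = ∑ i ∈ Finset.range p, u i + ∑ i ∈ Finset.range (q + 1), u (p + i) := by
        rw [Finset.range_eq_Ico,
          ← Finset.sum_Ico_consecutive u (by omega : 0 ≤ p) (by omega : p ≤ n + 1),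
          ← Finset.range_eq_Ico, Finset.sum_Ico_eq_sum_range]
        have e : n + 1 - p = q + 1 := by omega
        rw [e]
      have hsplitV : ∑ i ∈ Finset.range n, v i
          = ∑ i ∈ Finset.range p, v i + ∑ i ∈ Finset.range q, v (p + i) := by
        rw [Finset.range_eq_Ico,
          ← Finset.sum_Ico_consecutive v (by omega : 0 ≤ p) (by omega : p ≤ n),
          ← Finset.range_eq_Ico, Finset.sum_Ico_eq_sum_range]
        have e : n - p = q := by omega
        rw [e]
      have hhead : ∑ i ∈ Finset.range p, u i = ∑ i ∈ Finset.range p, v i := by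
        refine Finset.sum_congr rfl fun i hi => ?_
        have hip : i < p := Finset.mem_range.mp hi
        simp only [hu, hv]
        rw [hgle i (by omega), if_neg (by omega : ¬ i = p)]
      have hterm : ∀ i ∈ Finset.range q, u (p + (i + 1)) = v (p + i) := by
        intro i hi
        simp only [hu, hv]
        rcases Nat.eq_zero_or_pos i with h0' | h0'
        · subst h0'
          have e : p + (0 + 1) = p + 1 := by omega
          rw [e, hgp1]
          simp
        · rw [if_neg (by omega : ¬ p + i = p)]
          have e : p + (i + 1) = (p + i) + 1 := by omega
          rw [e, hgtop ((p + i) + 1) (by omega)]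
          have e2 : (p + i) + 1 - 1 = p + i := by omega
          rw [e2]
      have htail : ∑ i ∈ Finset.range (q + 1), u (p + i)
          = (∑ i ∈ Finset.range q, v (p + i)) + Ω l ∘L F ∅ := by
        rw [Finset.sum_range_succ' (fun i => u (p + i)) q]
        have h0 : u (p + 0) = Ω l ∘L F ∅ := by
          simp only [hu]
          rw [Nat.add_zero, hgle p le_rfl, hfp]
        rw [Finset.sum_congr rfl hterm, h0]
      rw [hsplitU, hsplitV, hhead, htail]
      abel
    have hdiff : Ω l ∘L F ∅
        = (RSsum F Ω (fun i : Fin (n + 1 + 1) => g i) (fun i : Fin (n + 1) => g i)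
            - RSsum F Ω (fun i : Fin (n + 1) => f i)
              (fun i : Fin n => if (i : ℕ) = p then m else f i)) ∘L F ∅ := by
      rw [ContinuousLinearMap.sub_comp, hcompA, hcompB, hsum]
      abel
    have hFn : (0:ℝ) ≤ ‖F ∅‖ := norm_nonneg _
    calc ‖Ω l ∘L F ∅‖
        = ‖(RSsum F Ω (fun i : Fin (n + 1 + 1) => g i) (fun i : Fin (n + 1) => g i)
            - RSsum F Ω (fun i : Fin (n + 1) => f i)
              (fun i : Fin n => if (i : ℕ) = p then m else f i)) ∘L F ∅‖ := by rw [← hdiff]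
      _ ≤ ‖RSsum F Ω (fun i : Fin (n + 1 + 1) => g i) (fun i : Fin (n + 1) => g i)
            - RSsum F Ω (fun i : Fin (n + 1) => f i)
              (fun i : Fin n => if (i : ℕ) = p then m else f i)‖ * ‖F ∅‖ :=
        ContinuousLinearMap.opNorm_comp_le _ _
      _ ≤ 2 * ε * ‖F ∅‖ := by
        have hsub : ‖RSsum F Ω (fun i : Fin (n + 1 + 1) => g i) (fun i : Fin (n + 1) => g i)
            - RSsum F Ω (fun i : Fin (n + 1) => f i)
              (fun i : Fin n => if (i : ℕ) = p then m else f i)‖ ≤ 2 * ε := by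
          have e : RSsum F Ω (fun i : Fin (n + 1 + 1) => g i) (fun i : Fin (n + 1) => g i)
              - RSsum F Ω (fun i : Fin (n + 1) => f i)
                (fun i : Fin n => if (i : ℕ) = p then m else f i)
              = (RSsum F Ω (fun i : Fin (n + 1 + 1) => g i) (fun i : Fin (n + 1) => g i) - J)
              - (RSsum F Ω (fun i : Fin (n + 1) => f i)
                (fun i : Fin n => if (i : ℕ) = p then m else f i) - J) := by abel
          rw [e]
          have := norm_sub_le
            (RSsum F Ω (fun i : Fin (n + 1 + 1) => g i) (fun i : Fin (n + 1) => g i) - J)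
            (RSsum F Ω (fun i : Fin (n + 1) => f i)
                (fun i : Fin n => if (i : ℕ) = p then m else f i) - J)
          linarith
        exact mul_le_mul_of_nonneg_right hsub hFn
  have he : 0 ≤ ‖Ω l ∘L F ∅‖ := norm_nonneg _
  have hnorm : ‖Ω l ∘L F ∅‖ ≤ 0 := by
    by_contra hc
    push_neg at hc
    have hc0 : (0:ℝ) ≤ ‖F ∅‖ := norm_nonneg _
    have hepos : 0 < ‖Ω l ∘L F ∅‖ / (4 * (‖F ∅‖ + 1)) := by positivity
    have h1 := hP (‖Ω l ∘L F ∅‖ / (4 * (‖F ∅‖ + 1))) hepos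
    have h2 : 2 * (‖Ω l ∘L F ∅‖ / (4 * (‖F ∅‖ + 1))) * (‖F ∅‖ + 1)
        = ‖Ω l ∘L F ∅‖ / 2 := by
      field_simp
      ring
    nlinarith [h1, h2, hc, hc0, hepos]
  exact norm_le_zero_iff.mp hnorm

lemma RSsum_mul {a b : ℝ} {F : Set ℝ → (H →L[ℂ] H)}
    (hFmul : ∀ δ₁ δ₂ : Set ℝ, F δ₁ ∘L F δ₂ = F (δ₁ ∩ δ₂))
    {Ω Ω₁ : ℝ → (H →L[ℂ] H)}
    (hΩ₁P : ∀ l ∈ Set.Ico a b, Ω₁ l ∘L F ∅ = 0)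
    (hcomm : ∀ δ : Set ℝ, δ ⊆ Set.Ico a b → ∀ l ∈ Set.Ico a b,
      Ω l ∘L F δ = F δ ∘L (Ω l ∘L F δ))
    {n : ℕ} (pts : Fin (n + 1) → ℝ) (tags : Fin n → ℝ)
    (h0 : pts 0 = a) (hlast : pts (Fin.last n) = b) (hmono : StrictMono pts)
    (htags : ∀ i : Fin n, tags i ∈ Set.Ico (pts i.castSucc) (pts i.succ)) :
    RSsum F Ω₁ pts tags ∘L RSsum F Ω pts tags
      = RSsum F (fun l => Ω₁ l ∘L Ω l) pts tags := by
  have hsub : ∀ i : Fin n, Set.Ico (pts i.castSucc) (pts i.succ) ⊆ Set.Ico a b := by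
    intro i x hx
    constructor
    · calc a = pts 0 := h0.symm
        _ ≤ pts i.castSucc := hmono.monotone (Fin.zero_le _)
        _ ≤ x := hx.1
    · calc x < pts i.succ := hx.2
        _ ≤ pts (Fin.last n) := hmono.monotone (Fin.le_last _)
        _ = b := hlast
  have htab : ∀ i : Fin n, tags i ∈ Set.Ico a b := fun i => hsub i (htags i)
  have hdisj : ∀ i j : Fin n, i ≠ j →
      Set.Ico (pts i.castSucc) (pts i.succ) ∩ Set.Ico (pts j.castSucc) (pts j.succ) = ∅ := by
    intro i j hij
    have key : ∀ i j : Fin n, i < j →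
        Set.Ico (pts i.castSucc) (pts i.succ) ∩ Set.Ico (pts j.castSucc) (pts j.succ) = ∅ := by
      intro i j h
      have hle : pts i.succ ≤ pts j.castSucc := by
        apply hmono.monotone
        simp only [Fin.le_def, Fin.val_succ, Fin.coe_castSucc]
        exact h
      rw [Set.Ico_inter_Ico]
      apply Set.Ico_eq_empty
      intro hcon
      have h1 : pts j.castSucc ≤ max (pts i.castSucc) (pts j.castSucc) := le_max_right _ _
      have h2 : min (pts i.succ) (pts j.succ) ≤ pts i.succ := min_le_left _ _
      have := lt_of_le_of_lt h1 (lt_of_lt_of_le hcon h2)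
      exact absurd hle (not_le.mpr this)
    rcases lt_or_gt_of_ne hij with h | h
    · exact key i j h
    · rw [Set.inter_comm]; exact key j i h
  have hcomm' : ∀ i : Fin n, Ω (tags i) * F (Set.Ico (pts i.castSucc) (pts i.succ))
      = F (Set.Ico (pts i.castSucc) (pts i.succ))
        * (Ω (tags i) * F (Set.Ico (pts i.castSucc) (pts i.succ))) :=
    fun i => hcomm _ (hsub i) (tags i) (htab i)
  have hFmul' : ∀ δ₁ δ₂ : Set ℝ, F δ₁ * F δ₂ = F (δ₁ ∩ δ₂) := hFmul
  show (∑ i : Fin n, Ω₁ (tags i) * F (Set.Ico (pts i.castSucc) (pts i.succ)))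
      * (∑ j : Fin n, Ω (tags j) * F (Set.Ico (pts j.castSucc) (pts j.succ)))
    = ∑ i : Fin n, (Ω₁ (tags i) * Ω (tags i)) * F (Set.Ico (pts i.castSucc) (pts i.succ))
  rw [Finset.sum_mul_sum]
  refine Finset.sum_congr rfl fun i _ => ?_
  rw [Finset.sum_eq_single_of_mem i (Finset.mem_univ i)]
  · rw [mul_assoc, ← hcomm' i, ← mul_assoc]
  · intro j _ hji
    have hP : Ω₁ (tags i) * F ∅ = 0 := hΩ₁P _ (htab i)
    rw [mul_assoc, hcomm' j, ← mul_assoc (F (Set.Ico (pts i.castSucc) (pts i.succ))),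
      hFmul', hdisj i j (Ne.symm hji), ← mul_assoc, hP, zero_mul]

/-- If `F` is an orthogonal (projection-valued) operator measure on `[a,b)`, the operator-spectral
integrals of `Ω₁` and `Ω` exist, and `Ω` satisfies the commutation relation
`Ω(λ)F(δ) = F(δ)Ω(λ)F(δ)` (i.e. `Ω` is `F`-admissible), then the integral of `Ω₁·Ω` exists and
`∫ Ω₁(λ)Ω(λ) F(dλ) = (∫ Ω₁(λ) F(dλ)) (∫ Ω(μ) F(dμ))`. -/
theorem stmt_2 (a b : ℝ) (hab : a < b) (F : Set ℝ → (H →L[ℂ] H))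
    (hFsa : ∀ δ : Set ℝ, IsSelfAdjoint (F δ))
    (hFmul : ∀ δ₁ δ₂ : Set ℝ, F δ₁ ∘L F δ₂ = F (δ₁ ∩ δ₂))
    (Ω Ω₁ : ℝ → (H →L[ℂ] H)) (J J₁ : H →L[ℂ] H)
    (hΩ₁ : IsRSIntegral a b F Ω₁ J₁) (hΩ : IsRSIntegral a b F Ω J)
    (hcomm : ∀ δ : Set ℝ, δ ⊆ Set.Ico a b → ∀ l ∈ Set.Ico a b,
      Ω l ∘L F δ = F δ ∘L (Ω l ∘L F δ)) :
    IsRSIntegral a b F (fun l => Ω₁ l ∘L Ω l) (J₁ ∘L J) := by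
  have hP : ∀ l ∈ Set.Ico a b, Ω₁ l ∘L F ∅ = 0 := fun l hl => keyP hab hFmul hΩ₁ hl
  intro ε hε
  have hC : (0:ℝ) < ‖J‖ + ‖J₁‖ + 1 := by positivity
  set ε' : ℝ := min 1 (ε / (2 * (‖J‖ + ‖J₁‖ + 1))) with hε'def
  have hε'pos : 0 < ε' := lt_min one_pos (by positivity)
  have hε'le1 : ε' ≤ 1 := min_le_left _ _
  have hε'le : ε' ≤ ε / (2 * (‖J‖ + ‖J₁‖ + 1)) := min_le_right _ _
  obtain ⟨δ₁, hδ₁pos, hδ₁⟩ := hΩ₁ ε' hε'pos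
  obtain ⟨δ₂, hδ₂pos, hδ₂⟩ := hΩ ε' hε'pos
  refine ⟨min δ₁ δ₂, lt_min hδ₁pos hδ₂pos, ?_⟩
  intro n pts tags h0 hlast hmono htags hmesh
  have hm1 : ∀ i : Fin n, pts i.succ - pts i.castSucc < δ₁ :=
    fun i => (hmesh i).trans_le (min_le_left _ _)
  have hm2 : ∀ i : Fin n, pts i.succ - pts i.castSucc < δ₂ :=
    fun i => (hmesh i).trans_le (min_le_right _ _)
  have h1 := hδ₁ n pts tags h0 hlast hmono htags hm1
  have h2 := hδ₂ n pts tags h0 hlast hmono htags hm2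
  rw [← RSsum_mul hFmul hP hcomm pts tags h0 hlast hmono htags]
  set S₁ := RSsum F Ω₁ pts tags with hS₁
  set S := RSsum F Ω pts tags with hS
  have key : S₁ ∘L S - J₁ ∘L J = (S₁ - J₁) ∘L S + J₁ ∘L (S - J) := by
    rw [ContinuousLinearMap.sub_comp, ContinuousLinearMap.comp_sub]
    abel
  rw [key]
  have hSle : ‖S‖ ≤ ‖J‖ + 1 := by
    have := norm_sub_norm_le S J
    linarith
  have hb1 : ‖(S₁ - J₁) ∘L S‖ ≤ ‖S₁ - J₁‖ * ‖S‖ := ContinuousLinearMap.opNorm_comp_le _ _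
  have hb2 : ‖J₁ ∘L (S - J)‖ ≤ ‖J₁‖ * ‖S - J‖ := ContinuousLinearMap.opNorm_comp_le _ _
  have htri : ‖(S₁ - J₁) ∘L S + J₁ ∘L (S - J)‖
      ≤ ‖(S₁ - J₁) ∘L S‖ + ‖J₁ ∘L (S - J)‖ := norm_add_le _ _
  have hJ1 : (0:ℝ) ≤ ‖J₁‖ := norm_nonneg _
  have hS0 : (0:ℝ) ≤ ‖S‖ := norm_nonneg _
  have hSJ : (0:ℝ) ≤ ‖S₁ - J₁‖ := norm_nonneg _
  have hmul1 : ‖S₁ - J₁‖ * ‖S‖ ≤ ε' * (‖J‖ + 1) := by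
    apply mul_le_mul h1.le hSle hS0
    exact hε'pos.le
  have hmul2 : ‖J₁‖ * ‖S - J‖ ≤ ‖J₁‖ * ε' := mul_le_mul_of_nonneg_left h2.le hJ1
  have hfin : ε' * (‖J‖ + 1) + ‖J₁‖ * ε' = ε' * (‖J‖ + ‖J₁‖ + 1) := by ring
  have hhalf : ε' * (‖J‖ + ‖J₁‖ + 1) ≤ ε / 2 := by
    calc ε' * (‖J‖ + ‖J₁‖ + 1) ≤ (ε / (2 * (‖J‖ + ‖J₁‖ + 1))) * (‖J‖ + ‖J₁‖ + 1) :=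
          mul_le_mul_of_nonneg_right hε'le hC.le
      _ = ε / 2 := by
          field_simp
  linarith
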